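/- Let C be a finitely complete centralic category in which regular epimorphisms are stable under binary products. If f : A → Y is central and q : Y → Q is a regular epimorphism, then q ∘ f is central. -/

import Mathlib

open CategoryTheory CategoryTheory.Limits

universe v u

/-- A pointed category with binary products is *centralic*. -/
def Centralic (C : Type u) [Category.{v} C] [HasZeroObject C] [HasZeroMorphisms C]
    [HasBinaryProducts C] : Prop :=
  ∀ ⦃X Y Z S : C⦄ (f : X ⨯ Y ⟶ Z) (x x' : S ⟶ X) (y : S ⟶ Y),
    prod.lift x 0 ≫ f = prod.lift x' 0 ≫ f →
    prod.lift x y ≫ f = prod.lift x' y ≫ f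

/-- `ρ : A ⨯ B ⟶ X` is a cooperator for `f : A ⟶ X` and `g : B ⟶ X`. -/
def IsCooperator {C : Type u} [Category.{v} C] [HasZeroObject C] [HasZeroMorphisms C]
    [HasBinaryProducts C] {A B X : C} (f : A ⟶ X) (g : B ⟶ X) (ρ : A ⨯ B ⟶ X) : Prop :=
  prod.lift (𝟙 A) 0 ≫ ρ = f ∧ prod.lift 0 (𝟙 B) ≫ ρ = g

/-- Two morphisms with common codomain commute if they admit a cooperator. -/
def Commutes {C : Type u} [Category.{v} C] [HasZeroObject C] [HasZeroMorphisms C]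
    [HasBinaryProducts C] {A B X : C} (f : A ⟶ X) (g : B ⟶ X) : Prop :=
  ∃ ρ : A ⨯ B ⟶ X, IsCooperator f g ρ

/-- A morphism `f : A ⟶ B` is central if it commutes with `𝟙 B`. -/
def Central {C : Type u} [Category.{v} C] [HasZeroObject C] [HasZeroMorphisms C]
    [HasBinaryProducts C] {A B : C} (f : A ⟶ B) : Prop :=
  Commutes f (𝟙 B)

/-- `q : X ⟶ Q` is a coequalizer of `u v : A ⟶ X`. -/
def IsCoequalizerDiagram {C : Type u} [Category.{v} C] {A X Q : C}
    (u v : A ⟶ X) (q : X ⟶ Q) : Prop :=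
  u ≫ q = v ≫ q ∧ ∀ ⦃Z : C⦄ (h : X ⟶ Z), u ≫ h = v ≫ h → ∃! t : Q ⟶ Z, q ≫ t = h

/-- A morphism is a regular epimorphism if it is the coequalizer of some pair. -/
def IsRegularEpimorphism {C : Type u} [Category.{v} C] {X Q : C} (q : X ⟶ Q) : Prop :=
  ∃ (A : C) (u v : A ⟶ X), IsCoequalizerDiagram u v q

/-- Regular epimorphisms are stable under binary products. -/
def RegularEpisStableUnderProducts (C : Type u) [Category.{v} C] [HasBinaryProducts C] : Prop :=
  ∀ ⦃X₁ Q₁ X₂ Q₂ : C⦄ (q₁ : X₁ ⟶ Q₁) (q₂ : X₂ ⟶ Q₂),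
    IsRegularEpimorphism q₁ → IsRegularEpimorphism q₂ →
    IsRegularEpimorphism (prod.map q₁ q₂)

/-- Postcomposition of a central morphism with a regular epi is central. -/
theorem stmt14 (C : Type u) [Category.{v} C] [HasZeroObject C] [HasZeroMorphisms C]
    [HasFiniteLimits C] (hC : Centralic C)
    (hstab : RegularEpisStableUnderProducts C)
    {A Y Q : C} (f : A ⟶ Y) (hf : Central f)
    (q : Y ⟶ Q) (hq : IsRegularEpimorphism q) :
    Central (f ≫ q) := by
  obtain ⟨ρ, hρ1, hρ2⟩ := hf
  -- 𝟙 A is a regular epi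
  have hid : IsRegularEpimorphism (𝟙 A) := by
    refine ⟨A, 𝟙 A, 𝟙 A, rfl, fun Z h _ => ⟨h, by simp, fun t ht => by simpa using ht⟩⟩
  -- q is an epi
  have hqepi : ∀ ⦃Z : C⦄ (a b : Q ⟶ Z), q ≫ a = q ≫ b → a = b := by
    intro Z a b hab
    obtain ⟨B, u, v, huv, hcq⟩ := hq
    obtain ⟨t, _, ht⟩ := hcq (q ≫ a) (by rw [reassoc_of% huv])
    exact (ht a rfl).trans (ht b hab.symm).symm
  obtain ⟨B, u, v, huv, hcq⟩ := hstab (𝟙 A) q hid hq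
  set u₁ := u ≫ prod.fst with hu₁
  set u₂ := u ≫ prod.snd with hu₂
  set v₁ := v ≫ prod.fst with hv₁
  set v₂ := v ≫ prod.snd with hv₂
  have h1 : u₁ = v₁ := by
    have := huv =≫ prod.fst
    simpa [prod.map_fst] using this
  have h2 : u₂ ≫ q = v₂ ≫ q := by
    have := huv =≫ prod.snd
    simpa [prod.map_snd, hu₂, hv₂] using this
  -- centralic hypothesis applied to the swapped map
  have key : u ≫ ρ ≫ q = v ≫ ρ ≫ q := by
    have hx : prod.lift u₂ (0 : B ⟶ A) ≫ (prod.lift prod.snd prod.fst ≫ ρ ≫ q)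
        = prod.lift v₂ 0 ≫ (prod.lift prod.snd prod.fst ≫ ρ ≫ q) := by
      have e1 : prod.lift u₂ (0 : B ⟶ A) ≫ prod.lift prod.snd prod.fst
          = u₂ ≫ prod.lift (0 : Y ⟶ A) (𝟙 Y) := by
        apply Limits.prod.hom_ext <;> simp [prod.lift_fst, prod.lift_snd]
      have e2 : prod.lift v₂ (0 : B ⟶ A) ≫ prod.lift prod.snd prod.fst
          = v₂ ≫ prod.lift (0 : Y ⟶ A) (𝟙 Y) := by
        apply Limits.prod.hom_ext <;> simp [prod.lift_fst, prod.lift_snd]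
      rw [reassoc_of% e1, reassoc_of% e2, reassoc_of% hρ2]
      simpa using h2
    have := hC (prod.lift prod.snd prod.fst ≫ ρ ≫ q) u₂ v₂ u₁ hx
    have eu : prod.lift u₂ u₁ ≫ prod.lift prod.snd prod.fst = u := by
      apply Limits.prod.hom_ext <;> simp [hu₁, hu₂, prod.lift_fst, prod.lift_snd]
    have ev : prod.lift v₂ u₁ ≫ prod.lift prod.snd prod.fst = v := by
      apply Limits.prod.hom_ext <;> simp [hv₁, h1, hv₂, prod.lift_fst, prod.lift_snd]
    rw [reassoc_of% eu, reassoc_of% ev] at this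
    exact this
  obtain ⟨σ, hσ, _⟩ := hcq (ρ ≫ q) key
  refine ⟨σ, ?_, ?_⟩
  · have e : prod.lift (𝟙 A) (0 : A ⟶ Q) = prod.lift (𝟙 A) (0 : A ⟶ Y) ≫ prod.map (𝟙 A) q := by
      apply Limits.prod.hom_ext <;> simp
    rw [e, Category.assoc, hσ, reassoc_of% hρ1]
  · apply hqepi
    have e : q ≫ prod.lift (0 : Q ⟶ A) (𝟙 Q) = prod.lift (0 : Y ⟶ A) (𝟙 Y) ≫ prod.map (𝟙 A) q := by
      apply Limits.prod.hom_ext <;> simp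
    rw [reassoc_of% e, hσ, reassoc_of% hρ2]
    simp
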